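/- If G is a finite simple graph with no induced subgraph isomorphic to K_{1,3} (claw-free), then i(G) = γ(G). -/

import Mathlib

open Finset

/-- `D` is a dominating set of `G`: every vertex outside `D` has a neighbor in `D`. -/
def IsDomSet {V : Type*} (G : SimpleGraph V) (D : Finset V) : Prop :=
  ∀ v ∉ D, ∃ u ∈ D, G.Adj u v

/-- `D` is an independent set of `G`. -/
def IsIndepSet {V : Type*} (G : SimpleGraph V) (D : Finset V) : Prop :=
  ∀ u ∈ D, ∀ v ∈ D, ¬ G.Adj u v

/-- The domination number. -/
noncomputable def domNum {V : Type*} [Fintype V] (G : SimpleGraph V) : ℕ :=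
  sInf {n | ∃ D : Finset V, IsDomSet G D ∧ D.card = n}

/-- The independent domination number. -/
noncomputable def indDomNum {V : Type*} [Fintype V] (G : SimpleGraph V) : ℕ :=
  sInf {n | ∃ D : Finset V, IsDomSet G D ∧ IsIndepSet G D ∧ D.card = n}

lemma claw_aux {V : Type*} (G : SimpleGraph V)
    (hclaw : IsEmpty (completeBipartiteGraph (Fin 1) (Fin 3) ↪g G))
    {a b c d : V} (hab : G.Adj a b) (hac : G.Adj a c) (had : G.Adj a d)
    (hbc : b ≠ c) (hbd : b ≠ d) (hcd : c ≠ d)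
    (nbc : ¬ G.Adj b c) (nbd : ¬ G.Adj b d) : G.Adj c d := by
  by_contra ncd
  apply hclaw.false
  have hba := hab.symm; have hca := hac.symm; have hda := had.symm
  have nab := hab.ne; have nac := hac.ne; have nad := had.ne
  have ncb : ¬ G.Adj c b := fun h => nbc h.symm
  have ndb : ¬ G.Adj d b := fun h => nbd h.symm
  have ndc : ¬ G.Adj d c := fun h => ncd h.symm
  refine ⟨⟨Sum.elim (fun _ => a) ![b, c, d], ?_⟩, ?_⟩
  · rintro (x | x) (y | y) h
    · fin_cases x <;> fin_cases y <;> rfl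
    · fin_cases x <;> fin_cases y <;> simp_all
    · fin_cases x <;> fin_cases y <;> simp_all
    · fin_cases x <;> fin_cases y <;> simp_all
  · rintro (x | x) (y | y)
    · fin_cases x <;> fin_cases y <;> simp_all
    · fin_cases x <;> fin_cases y <;> simp_all [DFunLike.coe]
    · fin_cases x <;> fin_cases y <;> simp_all [DFunLike.coe]
    · fin_cases x <;> fin_cases y <;> simp_all [G.irrefl, DFunLike.coe]

theorem stmt12 {V : Type*} [Fintype V] (G : SimpleGraph V)
    (hclaw : IsEmpty (completeBipartiteGraph (Fin 1) (Fin 3) ↪g G)) :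
    indDomNum G = domNum G := by
  classical
  have hSne : {n | ∃ D : Finset V, IsDomSet G D ∧ D.card = n}.Nonempty :=
    ⟨(univ : Finset V).card, univ, fun v hv => absurd (mem_univ v) hv, rfl⟩
  obtain ⟨D0, hD0dom, hD0card⟩ := Nat.sInf_mem hSne
  set F : Finset (Finset V) :=
    univ.filter (fun D => IsDomSet G D ∧ D.card = domNum G) with hF
  have hD0F : D0 ∈ F := by
    rw [hF, mem_filter]
    exact ⟨mem_univ _, hD0dom, hD0card⟩
  obtain ⟨D, hDF, hDmin⟩ := F.exists_min_image
    (fun S => ((S ×ˢ S).filter (fun p => G.Adj p.1 p.2)).card) ⟨D0, hD0F⟩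
  rw [hF, mem_filter] at hDF
  obtain ⟨-, hDdom, hDcard⟩ := hDF
  -- D is independent
  have hDind : IsIndepSet G D := by
    intro u hu v hv huv
    have hvu : v ≠ u := fun h => G.irrefl (h ▸ huv).symm
    -- D.erase u is not dominating
    have hDe : ¬ IsDomSet G (D.erase u) := by
      intro h
      have h1 : domNum G ≤ (D.erase u).card := Nat.sInf_le ⟨_, h, rfl⟩
      have h2 : 0 < D.card := card_pos.2 ⟨u, hu⟩
      rw [card_erase_of_mem hu, hDcard] at h1
      omega
    -- extract a private neighbor w of u
    rw [IsDomSet] at hDe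
    push_neg at hDe
    obtain ⟨w, hwE, hwpriv⟩ := hDe
    have hwD : w ∉ D := by
      intro hwD
      have hwu : w = u := by
        by_contra h; exact hwE (mem_erase.2 ⟨h, hwD⟩)
      subst hwu
      exact hwpriv v (mem_erase.2 ⟨hvu, hv⟩) huv.symm
    have hwu : w ≠ u := fun h => hwD (h ▸ hu)
    have hadjuw : G.Adj u w := by
      obtain ⟨y, hyD, hyw⟩ := hDdom w hwD
      have : y = u := by
        by_contra h
        exact hwpriv y (mem_erase.2 ⟨h, hyD⟩) hyw
      exact this ▸ hyw
    have hpriv : ∀ y ∈ D, y ≠ u → ¬ G.Adj y w :=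
      fun y hy hne => hwpriv y (mem_erase.2 ⟨hne, hy⟩)
    -- the swapped set D'
    set D' : Finset V := insert w (D.erase u) with hD'
    have hwE' : w ∉ D.erase u := hwE
    have hD'card : D'.card = domNum G := by
      rw [hD', card_insert_of_notMem hwE', card_erase_of_mem hu, hDcard]
      have h2 : 0 < D.card := card_pos.2 ⟨u, hu⟩
      omega
    have huD' : u ∉ D' := by
      rw [hD', mem_insert]
      rintro (h | h)
      · exact hwu h.symm
      · exact (mem_erase.1 h).1 rfl
    have hD'dom : IsDomSet G D' := by
      intro x hxD'
      by_cases hxu : x = u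
      · exact ⟨w, mem_insert_self _ _, hxu ▸ hadjuw.symm⟩
      · have hxD : x ∉ D := by
          intro hxD
          exact hxD' (mem_insert_of_mem (mem_erase.2 ⟨hxu, hxD⟩))
        obtain ⟨y, hyD, hyx⟩ := hDdom x hxD
        by_cases hyu : y = u
        · have hyx' : G.Adj u x := hyu ▸ hyx
          -- is x dominated by someone else in D?
          by_cases hother : ∃ z ∈ D, z ≠ u ∧ G.Adj z x
          · obtain ⟨z, hzD, hzu, hzx⟩ := hother
            exact ⟨z, mem_insert_of_mem (mem_erase.2 ⟨hzu, hzD⟩), hzx⟩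
          · -- x is a private neighbor of u; claw-freeness gives Adj w x
            push_neg at hother
            have hxw : x ≠ w := fun h => hxD' (h ▸ mem_insert_self w _)
            have nvx : ¬ G.Adj v x := fun h => (hother v hv hvu) h
            have nvw : ¬ G.Adj v w := hpriv v hv hvu
            have hvw : v ≠ w := fun h => hwD (h ▸ hv)
            have hvx : v ≠ x := fun h => hxD (h ▸ hv)
            have hwx : w ≠ x := fun h => hxw h.symm
            have : G.Adj w x := claw_aux G hclaw huv hadjuw hyx' hvw hvx hwx nvw nvx
            exact ⟨w, mem_insert_self _ _, this⟩
        · exact ⟨y, mem_insert_of_mem (mem_erase.2 ⟨hyu, hyD⟩), hyx⟩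
    -- edge count drops strictly
    have hsub : (D' ×ˢ D').filter (fun p => G.Adj p.1 p.2) ⊂
        (D ×ˢ D).filter (fun p => G.Adj p.1 p.2) := by
      constructor
      · intro p hp
        rw [mem_filter, mem_product] at hp ⊢
        obtain ⟨⟨hp1, hp2⟩, hadj⟩ := hp
        have key : ∀ z ∈ D', z ≠ w → z ∈ D ∧ z ≠ u := by
          intro z hz hzw
          rw [hD', mem_insert] at hz
          rcases hz with h | h
          · exact absurd h hzw
          · exact ⟨(mem_erase.1 h).2, (mem_erase.1 h).1⟩
        have hp1w : p.1 ≠ w := by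
          intro h
          have hp2w : p.2 ≠ w := fun h2 => G.irrefl (h ▸ h2 ▸ hadj)
          obtain ⟨h2D, h2u⟩ := key p.2 hp2 hp2w
          exact hpriv p.2 h2D h2u (h ▸ hadj).symm
        have hp2w : p.2 ≠ w := by
          intro h
          obtain ⟨h1D, h1u⟩ := key p.1 hp1 hp1w
          exact hpriv p.1 h1D h1u (h ▸ hadj)
        exact ⟨⟨(key p.1 hp1 hp1w).1, (key p.2 hp2 hp2w).1⟩, hadj⟩
      · intro hsub'
        have : ((u, v) : V × V) ∈ (D' ×ˢ D').filter (fun p => G.Adj p.1 p.2) :=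
          hsub' (by rw [mem_filter, mem_product]; exact ⟨⟨hu, hv⟩, huv⟩)
        rw [mem_filter, mem_product] at this
        exact huD' this.1.1
    have hlt := card_lt_card hsub
    have hle := hDmin D' (by simp [hF, hD'dom, hD'card])
    omega
  -- conclude
  have hmem : domNum G ∈ {n | ∃ D : Finset V, IsDomSet G D ∧ IsIndepSet G D ∧ D.card = n} :=
    ⟨D, hDdom, hDind, hDcard⟩
  have h1 : indDomNum G ≤ domNum G := Nat.sInf_le hmem
  have h2 : domNum G ≤ indDomNum G := by
    obtain ⟨D', hD'dom, _, hD'card⟩ := Nat.sInf_mem ⟨domNum G, hmem⟩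
    exact Nat.sInf_le ⟨D', hD'dom, hD'card⟩
  omega
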